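/- Let β₁ = √μ_s·μ, β₂ = √μ_s·L/√μ, β₃ = 13√μ/16, and β₄ = (4μ²√s + 3L√μ·√μ_s)/(8L²). Fix positive reals n̲ ≤ n̄ and m̲ ≤ m̄, and let a ≥ 0 be such that either −β₁m̲² + β₂m̄n̄ ≤ 0, or a ≤ (β₃m̲² + β₄n̲²)/(−β₁m̲² + β₂m̄n̄). Then for every (x,v) ∈ ℝⁿ×ℝⁿ with n̲ ≤ ‖∇f(x)‖ < n̄ and m̲ ≤ ‖v‖ < m̄, one has ⟨∇V(x,v), X^a_hb(x,v)⟩ ≤ −(√μ/4)V(x,v). -/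

import Mathlib

open scoped RealInnerProductSpace

set_option maxHeartbeats 2000000

noncomputable section

/-- √μ_s := 1 + √(μs) -/
def ms (μ s : ℝ) : ℝ := 1 + Real.sqrt (μ * s)

/-- Lyapunov function V(x,v). -/
def Vf {n : ℕ} (μ s : ℝ) (f : EuclideanSpace ℝ (Fin n) → ℝ)
    (xs x v : EuclideanSpace ℝ (Fin n)) : ℝ :=
  ms μ s * (f x - f xs) + (1 / 4) * ‖v‖ ^ 2
    + (1 / 4) * ‖v + (2 * Real.sqrt μ) • (x - xs)‖ ^ 2

/-- ⟨∇V(x,v), X^a_hb(x,v)⟩ written out. -/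
def lieV {n : ℕ} (μ s : ℝ) (f' : EuclideanSpace ℝ (Fin n) → EuclideanSpace ℝ (Fin n))
    (xs : EuclideanSpace ℝ (Fin n)) (a : ℝ) (x v : EuclideanSpace ℝ (Fin n)) : ℝ :=
  ⟪ms μ s • f' x + Real.sqrt μ • v + (2 * μ) • (x - xs), v⟫
    + ⟪v + Real.sqrt μ • (x - xs),
        -((2 * Real.sqrt μ) • v) - ms μ s • f' (x + a • v)⟫

def beta1 (μ s : ℝ) : ℝ := ms μ s * μ
def beta2 (μ L s : ℝ) : ℝ := ms μ s * L / Real.sqrt μ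
def beta3 (μ : ℝ) : ℝ := 13 * Real.sqrt μ / 16
def beta4 (μ L s : ℝ) : ℝ :=
  (4 * μ ^ 2 * Real.sqrt s + 3 * L * Real.sqrt μ * ms μ s) / (8 * L ^ 2)

/-! ### Auxiliary lemmas -/

lemma line_deriv {n : ℕ} (f : EuclideanSpace ℝ (Fin n) → ℝ)
    (f' : EuclideanSpace ℝ (Fin n) → EuclideanSpace ℝ (Fin n))
    (hgrad : ∀ x, HasGradientAt f (f' x) x) (x u : EuclideanSpace ℝ (Fin n)) (t : ℝ) :
    HasDerivAt (fun t : ℝ => f (x + t • u)) ⟪f' (x + t • u), u⟫ t := by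
  have h1 : HasDerivAt (fun t : ℝ => x + t • u) u t := by
    simpa using ((hasDerivAt_id t).smul_const u).const_add x
  have h2 := (hgrad (x + t • u)).hasFDerivAt.comp_hasDerivAt t h1
  exact h2

lemma descent {n : ℕ} (L : ℝ) (f : EuclideanSpace ℝ (Fin n) → ℝ)
    (f' : EuclideanSpace ℝ (Fin n) → EuclideanSpace ℝ (Fin n))
    (hgrad : ∀ x, HasGradientAt f (f' x) x)
    (hlip : ∀ x y, ‖f' x - f' y‖ ≤ L * ‖x - y‖) (x u : EuclideanSpace ℝ (Fin n)) :
    f (x + u) ≤ f x + ⟪f' x, u⟫ + L / 2 * ‖u‖ ^ 2 := by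
  set ψ : ℝ → ℝ := fun t => f (x + t • u) - t * ⟪f' x, u⟫ - L / 2 * ‖u‖ ^ 2 * t ^ 2 with hψ
  have hψd : ∀ t : ℝ, HasDerivAt ψ (⟪f' (x + t • u), u⟫ - ⟪f' x, u⟫ - L * ‖u‖ ^ 2 * t) t := by
    intro t
    have h1 := (line_deriv f f' hgrad x u t).sub (hasDerivAt_mul_const (⟪f' x, u⟫))
    have h2 := h1.sub ((hasDerivAt_pow 2 t).const_mul (L / 2 * ‖u‖ ^ 2))
    convert h2 using 1
    · rfl
    · rfl
    · rfl
    · rw [show (2:ℕ) - 1 = 1 from rfl]; push_cast; ring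
  have hanti : AntitoneOn ψ (Set.Icc (0:ℝ) 1) := by
    apply antitoneOn_of_hasDerivWithinAt_nonpos (convex_Icc 0 1)
      (fun t _ => (hψd t).continuousAt.continuousWithinAt)
      (fun t _ => (hψd t).hasDerivWithinAt)
    intro t ht
    rw [interior_Icc] at ht
    have h3 : ⟪f' (x + t • u) - f' x, u⟫ ≤ ‖f' (x + t • u) - f' x‖ * ‖u‖ :=
      real_inner_le_norm _ _
    have h4 : ‖f' (x + t • u) - f' x‖ ≤ L * ‖x + t • u - x‖ := hlip _ _
    have h5 : ‖x + t • u - x‖ = t * ‖u‖ := by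
      rw [add_sub_cancel_left, norm_smul, Real.norm_eq_abs, abs_of_pos ht.1]
    have h6 : ⟪f' (x + t • u) - f' x, u⟫ = ⟪f' (x + t • u), u⟫ - ⟪f' x, u⟫ := by
      rw [inner_sub_left]
    rw [h5] at h4
    nlinarith [norm_nonneg u, norm_nonneg (f' (x + t • u) - f' x)]
  have h7 := hanti (Set.left_mem_Icc.2 zero_le_one) (Set.right_mem_Icc.2 zero_le_one) zero_le_one
  simp only [hψ, one_smul, zero_smul, add_zero, one_pow, mul_one, zero_pow, mul_zero,
    zero_mul, sub_zero, one_ne_zero] at h7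
  linarith

lemma lieV_eq {n : ℕ} (μ s a : ℝ) (hμ : 0 < μ)
    (f' : EuclideanSpace ℝ (Fin n) → EuclideanSpace ℝ (Fin n))
    (xs x v : EuclideanSpace ℝ (Fin n)) :
    lieV μ s f' xs a x v
      = -(Real.sqrt μ * ‖v‖ ^ 2) - Real.sqrt μ * ms μ s * ⟪f' x, x - xs⟫
        - ms μ s * ⟪v, f' (x + a • v) - f' x⟫
        - Real.sqrt μ * ms μ s * ⟪x - xs, f' (x + a • v) - f' x⟫ := by
  have hpp : Real.sqrt μ * Real.sqrt μ = μ := Real.mul_self_sqrt hμ.le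
  simp only [lieV, inner_add_left, inner_add_right, inner_sub_right, inner_sub_left,
    inner_neg_right, real_inner_smul_left, real_inner_smul_right, real_inner_self_eq_norm_sq]
  have h1 : (inner ℝ (f' x) v : ℝ) = inner ℝ v (f' x) := real_inner_comm _ _
  have h2 : (inner ℝ (f' x) x : ℝ) = inner ℝ x (f' x) := real_inner_comm _ _
  have h3 : (inner ℝ (f' x) xs : ℝ) = inner ℝ xs (f' x) := real_inner_comm _ _
  linear_combination (ms μ s) * h1 + (Real.sqrt μ * ms μ s) * h2 - (Real.sqrt μ * ms μ s) * h3
    - (2*(inner ℝ x v : ℝ) - 2*(inner ℝ xs v : ℝ)) * hpp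

lemma Vf_eq {n : ℕ} (μ s : ℝ) (hμ : 0 < μ) (f : EuclideanSpace ℝ (Fin n) → ℝ)
    (xs x v : EuclideanSpace ℝ (Fin n)) :
    Vf μ s f xs x v = ms μ s * (f x - f xs) + (1/2) * ‖v‖ ^ 2
      + Real.sqrt μ * ⟪v, x - xs⟫ + μ * ‖x - xs‖ ^ 2 := by
  have hpp : Real.sqrt μ * Real.sqrt μ = μ := Real.mul_self_sqrt hμ.le
  have hp0 : (0:ℝ) ≤ 2 * Real.sqrt μ := by positivity
  rw [Vf, norm_add_sq_real, real_inner_smul_right, norm_smul, Real.norm_eq_abs,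
    abs_of_nonneg hp0, mul_pow]
  ring_nf
  linear_combination (‖x - xs‖ ^ 2) * hpp

/-- The purely scalar final inequality. -/
lemma final_ineq (p t c L a M N R D A B C1 C2 h mlo mhi nlo nhi : ℝ)
    (hp : 0 < p) (ht : 0 ≤ t) (hc : c = 1 + p * t) (hL : 0 < L) (ha : 0 ≤ a)
    (hM : 0 ≤ M) (hN : 0 ≤ N) (hR : 0 ≤ R) (hD0 : 0 ≤ D)
    (hmlo : 0 < mlo) (hm1 : mlo ≤ M) (hm2 : M < mhi)
    (hnlo : 0 < nlo) (hn1 : nlo ≤ N) (hn2 : N < nhi)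
    (hA : h + p * p / 2 * R ^ 2 ≤ A)
    (hB : B ≤ M * R)
    (hh : N ^ 2 / (2 * L) ≤ h)
    (hNLR : N ≤ L * R)
    (hRN : p * p * R ≤ N)
    (hC1 : p * p * (a * M ^ 2) ≤ C1)
    (hC2 : -C2 ≤ R * D)
    (hDb : D ≤ L * (a * M))
    (key : a * (-(c * (p * p) * mlo ^ 2) + c * L / p * (mhi * nhi))
      ≤ 13 * p / 16 * mlo ^ 2 + (4 * (p * p) ^ 2 * t + 3 * L * (p * c)) / (8 * L ^ 2) * nlo ^ 2) :
    -(p * M ^ 2) - p * c * A - c * C1 - p * c * C2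
      ≤ -(p / 4) * (c * h + 1 / 2 * M ^ 2 + p * B + p * p * R ^ 2) := by
  have hc1 : (1:ℝ) ≤ c := by nlinarith [mul_nonneg hp.le ht]
  have hc0 : (0:ℝ) ≤ c := by linarith
  have FA : p * c * (h + p * p / 2 * R ^ 2) ≤ p * c * A :=
    mul_le_mul_of_nonneg_left hA (by positivity)
  have FB : p * p / 4 * B ≤ p * p / 4 * (M * R) :=
    mul_le_mul_of_nonneg_left hB (by positivity)
  have FAM : p * p / 4 * (M * R) ≤ p / 16 * M ^ 2 + p * p * p / 4 * R ^ 2 := by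
    have hq := mul_nonneg hp.le (sq_nonneg (M - 2 * p * R))
    linarith [hq]
  have hmsq : mlo ^ 2 ≤ M ^ 2 := by nlinarith
  have Fu3 : 13 * p / 16 * mlo ^ 2 ≤ 13 * p / 16 * M ^ 2 :=
    mul_le_mul_of_nonneg_left hmsq (by positivity)
  have Fu4 : c * (p * p * (a * mlo ^ 2)) ≤ c * C1 := by
    have h1 : p * p * (a * mlo ^ 2) ≤ p * p * (a * M ^ 2) := by
      have := mul_le_mul_of_nonneg_left hmsq (mul_nonneg (mul_nonneg hp.le hp.le) ha)
      nlinarith [this]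
    exact mul_le_mul_of_nonneg_left (le_trans h1 hC1) hc0
  have hRle : R ≤ N / (p * p) := by
    rw [le_div_iff₀ (by positivity)]
    nlinarith [hRN]
  have Fu5a : -C2 ≤ N / (p * p) * (L * (a * M)) := by
    have h1 : R * D ≤ N / (p * p) * (L * (a * M)) :=
      mul_le_mul hRle hDb hD0 (by positivity)
    linarith [hC2]
  have e2 : p * c * (N / (p * p) * (L * (a * M))) = a * (c * L / p) * (M * N) := by
    field_simp
  have Fu5 : -(p * c * C2) ≤ a * (c * L / p) * (M * N) := by
    have h1 := mul_le_mul_of_nonneg_left Fu5a (show (0:ℝ) ≤ p * c by positivity)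
    calc -(p * c * C2) = p * c * (-C2) := by ring
      _ ≤ p * c * (N / (p * p) * (L * (a * M))) := h1
      _ = a * (c * L / p) * (M * N) := e2
  have hMN : M * N ≤ mhi * nhi := mul_le_mul hm2.le hn2.le hN (by linarith)
  have Fu6 : a * (c * L / p) * (M * N) ≤ a * (c * L / p) * (mhi * nhi) :=
    mul_le_mul_of_nonneg_left hMN (by positivity)
  have hnsq : nlo ^ 2 / L ^ 2 ≤ R ^ 2 := by
    rw [div_le_iff₀ (by positivity)]
    nlinarith [hNLR, hn1, hR, hnlo]
  have Fu1 : p * p * (p * p) * t / 2 * (nlo ^ 2 / L ^ 2) ≤ p * p * (p * p) * t / 2 * R ^ 2 :=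
    mul_le_mul_of_nonneg_left hnsq (by positivity)
  have hnsq2 : nlo ^ 2 / (2 * L) ≤ h := by
    have h1 : nlo ^ 2 / (2 * L) ≤ N ^ 2 / (2 * L) := by
      gcongr
      all_goals nlinarith
    linarith [hh]
  have Fu2 : 3 * p * c / 4 * (nlo ^ 2 / (2 * L)) ≤ 3 * p * c / 4 * h :=
    mul_le_mul_of_nonneg_left hnsq2 (by positivity)
  have e1 : (4 * (p * p) ^ 2 * t + 3 * L * (p * c)) / (8 * L ^ 2) * nlo ^ 2
      = p * p * (p * p) * t / 2 * (nlo ^ 2 / L ^ 2) + 3 * p * c / 4 * (nlo ^ 2 / (2 * L)) := by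
    field_simp
    ring
  have hcR : p * p * p * c * R ^ 2 = p * p * p * R ^ 2 + p * p * p * (p * t) * R ^ 2 := by
    rw [hc]; ring
  linarith [FA, FB, FAM, Fu1, Fu2, Fu3, Fu4, Fu5, Fu6, key, e1, hcR]

/-- adaptive gradient-displacement bound on a region
R = { (x,v) : n̲ ≤ ‖∇f(x)‖ < n̄, m̲ ≤ ‖v‖ < m̄ }. -/
theorem stmt_6 {n : ℕ} (μ L s : ℝ) (hμ : 0 < μ) (hμL : μ ≤ L) (hs : 0 < s)
    (f : EuclideanSpace ℝ (Fin n) → ℝ)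
    (f' : EuclideanSpace ℝ (Fin n) → EuclideanSpace ℝ (Fin n))
    (hgrad : ∀ x, HasGradientAt f (f' x) x)
    (hconv : ∀ x y, f y - f x ≥ ⟪f' x, y - x⟫ + μ / 2 * ‖y - x‖ ^ 2)
    (hlip : ∀ x y, ‖f' x - f' y‖ ≤ L * ‖x - y‖)
    (xs : EuclideanSpace ℝ (Fin n)) (hmin : ∀ x, f xs ≤ f x) (hgs : f' xs = 0)
    (nlo nhi mlo mhi : ℝ) (hnlo : 0 < nlo) (hn : nlo ≤ nhi)
    (hmlo : 0 < mlo) (hm : mlo ≤ mhi)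
    (a : ℝ) (ha : 0 ≤ a)
    (hcond : -(beta1 μ s) * mlo ^ 2 + beta2 μ L s * mhi * nhi ≤ 0 ∨
      a ≤ (beta3 μ * mlo ^ 2 + beta4 μ L s * nlo ^ 2) /
            (-(beta1 μ s) * mlo ^ 2 + beta2 μ L s * mhi * nhi))
    (x v : EuclideanSpace ℝ (Fin n))
    (hn1 : nlo ≤ ‖f' x‖) (hn2 : ‖f' x‖ < nhi)
    (hm1 : mlo ≤ ‖v‖) (hm2 : ‖v‖ < mhi) :
    lieV μ s f' xs a x v ≤ -(Real.sqrt μ / 4) * Vf μ s f xs x v := by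
  have hpp : Real.sqrt μ * Real.sqrt μ = μ := Real.mul_self_sqrt hμ.le
  have hL : 0 < L := hμ.trans_le hμL
  have hp : 0 < Real.sqrt μ := Real.sqrt_pos.2 hμ
  have hcms : ms μ s = 1 + Real.sqrt μ * Real.sqrt s := by
    rw [ms, Real.sqrt_mul hμ.le]
  -- strong convexity at x, xs
  have h1 := hconv x xs
  rw [show xs - x = -(x - xs) from by abel, inner_neg_right, norm_neg] at h1
  have hbr : Real.sqrt μ * Real.sqrt μ / 2 * ‖x - xs‖ ^ 2 = μ / 2 * ‖x - xs‖ ^ 2 := by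
    rw [hpp]
  have hAineq : (f x - f xs) + Real.sqrt μ * Real.sqrt μ / 2 * ‖x - xs‖ ^ 2
      ≤ ⟪f' x, x - xs⟫ := by linarith [h1, hbr]
  -- strong convexity at xs, x
  have h2 := hconv xs x
  rw [hgs, inner_zero_left] at h2
  have hA2 : μ / 2 * ‖x - xs‖ ^ 2 ≤ f x - f xs := by linarith [h2]
  -- descent lemma: h ≥ N²/(2L)
  have hdes := descent L f f' hgrad hlip x ((-(1/L)) • f' x)
  have hi : ⟪f' x, (-(1/L)) • f' x⟫ = -(1/L) * ‖f' x‖ ^ 2 := by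
    rw [real_inner_smul_right, real_inner_self_eq_norm_sq]
  have hnn : ‖(-(1/L)) • f' x‖ ^ 2 = (1/L) ^ 2 * ‖f' x‖ ^ 2 := by
    rw [norm_smul, Real.norm_eq_abs, abs_neg, abs_of_nonneg (by positivity), mul_pow]
  rw [hi, hnn] at hdes
  have e3 : -(1/L) * ‖f' x‖ ^ 2 + L / 2 * ((1/L) ^ 2 * ‖f' x‖ ^ 2)
      = -(‖f' x‖ ^ 2 / (2 * L)) := by field_simp; ring
  have hhineq : ‖f' x‖ ^ 2 / (2 * L) ≤ f x - f xs := by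
    linarith [hmin (x + (-(1/L)) • f' x), hdes, e3]
  -- Lipschitz: N ≤ L R
  have hNLR : ‖f' x‖ ≤ L * ‖x - xs‖ := by
    have := hlip x xs; rwa [hgs, sub_zero] at this
  -- μ R ≤ N
  have hAN : ⟪f' x, x - xs⟫ ≤ ‖f' x‖ * ‖x - xs‖ := real_inner_le_norm _ _
  have hRN : Real.sqrt μ * Real.sqrt μ * ‖x - xs‖ ≤ ‖f' x‖ := by
    rcases eq_or_lt_of_le (norm_nonneg (x - xs)) with hz | hpos
    · rw [← hz, mul_zero]; exact norm_nonneg _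
    · have hmuR : μ * ‖x - xs‖ ^ 2 ≤ ‖f' x‖ * ‖x - xs‖ := by
        linarith [hAineq, hA2, hAN, hbr]
      rw [hpp]
      exact le_of_mul_le_mul_right (by nlinarith [hmuR]) hpos
  -- monotonicity: C1 ≥ μ a M²
  have hC1 : Real.sqrt μ * Real.sqrt μ * (a * ‖v‖ ^ 2)
      ≤ ⟪v, f' (x + a • v) - f' x⟫ := by
    rcases eq_or_lt_of_le ha with hz | hpos
    · simp [← hz]
    · have s1 := hconv x (x + a • v)
      have s2 := hconv (x + a • v) x
      rw [add_sub_cancel_left] at s1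
      rw [show x - (x + a • v) = -(a • v) from by abel, inner_neg_right, norm_neg] at s2
      have e6 : (⟪f' (x + a • v), a • v⟫ : ℝ) - ⟪f' x, a • v⟫
          = ⟪f' (x + a • v) - f' x, a • v⟫ := (inner_sub_left _ _ _).symm
      have e7 : (⟪f' (x + a • v) - f' x, a • v⟫ : ℝ)
          = a * ⟪v, f' (x + a • v) - f' x⟫ := by
        rw [real_inner_smul_right, real_inner_comm]
      have e8 : ‖a • v‖ ^ 2 = a ^ 2 * ‖v‖ ^ 2 := by
        rw [norm_smul, Real.norm_eq_abs, abs_of_nonneg ha, mul_pow]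
      have h9 : μ * (a ^ 2 * ‖v‖ ^ 2) ≤ a * ⟪v, f' (x + a • v) - f' x⟫ := by
        rw [e8] at s1 s2
        linarith [s1, s2, e6, e7]
      have hbr2 : a * (Real.sqrt μ * Real.sqrt μ * (a * ‖v‖ ^ 2)) = μ * (a ^ 2 * ‖v‖ ^ 2) := by
        rw [hpp]; ring
      exact le_of_mul_le_mul_left (by linarith [h9, hbr2]) hpos
  -- Cauchy–Schwarz for C2
  have hC2b : -⟪x - xs, f' (x + a • v) - f' x⟫
      ≤ ‖x - xs‖ * ‖f' (x + a • v) - f' x‖ := by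
    have := real_inner_le_norm (x - xs) (-(f' (x + a • v) - f' x))
    rwa [inner_neg_right, norm_neg] at this
  have hDb : ‖f' (x + a • v) - f' x‖ ≤ L * (a * ‖v‖) := by
    have := hlip (x + a • v) x
    rwa [add_sub_cancel_left, norm_smul, Real.norm_eq_abs, abs_of_nonneg ha] at this
  have hBcs : ⟪v, x - xs⟫ ≤ ‖v‖ * ‖x - xs‖ := real_inner_le_norm _ _
  -- key condition
  have hms0 : (0:ℝ) ≤ ms μ s := by
    rw [ms]; positivity
  have h3p : (0:ℝ) ≤ beta3 μ := by rw [beta3]; positivity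
  have h4p : (0:ℝ) ≤ beta4 μ L s := by
    rw [beta4]
    apply div_nonneg _ (by positivity)
    have hterm : (0:ℝ) ≤ 3 * L * Real.sqrt μ * ms μ s := by
      apply mul_nonneg (mul_nonneg (by linarith) (Real.sqrt_nonneg μ)) hms0
    nlinarith [Real.sqrt_nonneg s, sq_nonneg μ, hterm]
  have hnum0 : (0:ℝ) ≤ beta3 μ * mlo ^ 2 + beta4 μ L s * nlo ^ 2 := by
    have := mul_nonneg h3p (sq_nonneg mlo)
    have := mul_nonneg h4p (sq_nonneg nlo)
    linarith
  have keyb : a * (-(beta1 μ s) * mlo ^ 2 + beta2 μ L s * mhi * nhi)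
      ≤ beta3 μ * mlo ^ 2 + beta4 μ L s * nlo ^ 2 := by
    rcases hcond with hc1 | hc2
    · have := mul_nonneg ha (neg_nonneg.2 hc1)
      nlinarith [this]
    · rcases le_or_gt (-(beta1 μ s) * mlo ^ 2 + beta2 μ L s * mhi * nhi) 0 with hd0 | hdpos
      · have hq : (beta3 μ * mlo ^ 2 + beta4 μ L s * nlo ^ 2) /
            (-(beta1 μ s) * mlo ^ 2 + beta2 μ L s * mhi * nhi) ≤ 0 := by
          rcases eq_or_lt_of_le hd0 with he | hl
          · rw [he, div_zero]
          · exact div_nonpos_of_nonneg_of_nonpos hnum0 hl.le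
        have ha0 : a = 0 := le_antisymm (hc2.trans hq) ha
        rw [ha0, zero_mul]
        exact hnum0
      · exact (le_div_iff₀ hdpos).1 hc2
  have e4 : a * (-(ms μ s * (Real.sqrt μ * Real.sqrt μ) * mlo ^ 2)
        + ms μ s * L / Real.sqrt μ * (mhi * nhi))
      = a * (-(beta1 μ s) * mlo ^ 2 + beta2 μ L s * mhi * nhi) := by
    rw [beta1, beta2, hpp]; ring
  have e5 : 13 * Real.sqrt μ / 16 * mlo ^ 2
        + (4 * (Real.sqrt μ * Real.sqrt μ) ^ 2 * Real.sqrt s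
            + 3 * L * (Real.sqrt μ * ms μ s)) / (8 * L ^ 2) * nlo ^ 2
      = beta3 μ * mlo ^ 2 + beta4 μ L s * nlo ^ 2 := by
    rw [beta3, beta4, hpp]; ring
  have key : a * (-(ms μ s * (Real.sqrt μ * Real.sqrt μ) * mlo ^ 2)
        + ms μ s * L / Real.sqrt μ * (mhi * nhi))
      ≤ 13 * Real.sqrt μ / 16 * mlo ^ 2
        + (4 * (Real.sqrt μ * Real.sqrt μ) ^ 2 * Real.sqrt s
            + 3 * L * (Real.sqrt μ * ms μ s)) / (8 * L ^ 2) * nlo ^ 2 := by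
    rw [e4, e5]; exact keyb
  have main := final_ineq (Real.sqrt μ) (Real.sqrt s) (ms μ s) L a ‖v‖ ‖f' x‖ ‖x - xs‖
    ‖f' (x + a • v) - f' x‖ ⟪f' x, x - xs⟫ ⟪v, x - xs⟫ ⟪v, f' (x + a • v) - f' x⟫
    ⟪x - xs, f' (x + a • v) - f' x⟫ (f x - f xs) mlo mhi nlo nhi
    hp (Real.sqrt_nonneg s) hcms hL ha (norm_nonneg v) (norm_nonneg (f' x))
    (norm_nonneg (x - xs)) (norm_nonneg _) hmlo hm1 hm2 hnlo hn1 hn2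
    hAineq hBcs hhineq hNLR hRN hC1 hC2b hDb key
  rw [lieV_eq μ s a hμ f' xs x v, Vf_eq μ s hμ f xs x v]
  have hbr3 : Real.sqrt μ / 4 * (μ * ‖x - xs‖ ^ 2)
      = Real.sqrt μ / 4 * (Real.sqrt μ * Real.sqrt μ * ‖x - xs‖ ^ 2) := by rw [hpp]
  linarith [main, hbr3]

end
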